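/- arXiv:cs/0406061 — 2 statements merged into one kernel-verified Lean document; each statement's English description precedes it below -/
import Mathlib

section
/- In the smoothed standard protocol, fix Alice's input x, an even step t (so the t-th message is sent by Bob), and a transcript M_{t−1} of positive probability given x. Then the conditional distribution of the t-th message m_t given x and M_{t−1} satisfies Pr[m_t = m] = (1/L)·Q_t(m)/Q_{t−2}, and for every γ > 0, Pr_{m_t}[ Q_t(m_t)/Q_{t−2} ≤ γϵ/2 ] < γ. -/
open scoped Classical BigOperators

/-- States of the world: pairs `(x, y)` of `n`-bit strings. -/
abbrev St (n : ℕ) := (Fin n → Bool) × (Fin n → Bool)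

variable {n : ℕ}

/-- Round `z` to the nearest multiple of `2^{-b}`, ties broken upward. -/
noncomputable def roundb (b : ℕ) (z : ℝ) : ℝ :=
  (⌊z * 2 ^ b + 1 / 2⌋ : ℤ) * (2 : ℝ) ^ (-(b : ℤ))

/-- The (unnormalized) triangular likelihood `Δ(m, E)` of message `m` given
expectation `E`:  `1 - |m - round(E)|/ϵ` if `|m - round(E)| ≤ ϵ`, else `0`. -/
noncomputable def Dlt (ϵ : ℝ) (b : ℕ) (m E : ℝ) : ℝ :=
  if |m - roundb b E| ≤ ϵ then 1 - |m - roundb b E| / ϵ else 0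

/-- Alice's knowledge cell `Ω_A(ω) = {(x, y') ∈ Ω}`. -/
noncomputable def cellA (S : Finset (St n)) (ω : St n) : Finset (St n) :=
  S.filter fun ω' => ω'.1 = ω.1

/-- Bob's knowledge cell `Ω_B(ω) = {(x', y) ∈ Ω}`. -/
noncomputable def cellB (S : Finset (St n)) (ω : St n) : Finset (St n) :=
  S.filter fun ω' => ω'.2 = ω.2

/-- The probability (up to the constant factor `1/L` per message) of the transcript `M`
(most recent message first) given the state `ω`: the product over all messages of
`Δ(m_u, E_{sender,u-1}(ω, M_{u-1}))`, where the sender of message `u` is Alice iff `u`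
is odd, and `E_{i,u}` is the sender's posterior expectation of `f`. -/
noncomputable def lhd (S : Finset (St n)) (D f : St n → ℝ) (ϵ : ℝ) (b : ℕ) :
    List ℝ → St n → ℝ
  | [], _ => 1
  | m :: M, ω =>
    let c := if (M.length + 1) % 2 = 1 then cellA S ω else cellB S ω
    lhd S D f ϵ b M ω *
      Dlt ϵ b m ((∑ ω' ∈ c, D ω' * lhd S D f ϵ b M ω' * f ω') /
        (∑ ω' ∈ c, D ω' * lhd S D f ϵ b M ω'))

/-- Posterior expectation of `f` for the agent (`al = true` for Alice) with knowledge
cell containing `ω`, given the transcript `M` (most recent message first). -/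
noncomputable def postE (S : Finset (St n)) (D f : St n → ℝ) (ϵ : ℝ) (b : ℕ)
    (al : Bool) (M : List ℝ) (ω : St n) : ℝ :=
  (∑ ω' ∈ (if al then cellA S ω else cellB S ω), D ω' * lhd S D f ϵ b M ω' * f ω') /
  (∑ ω' ∈ (if al then cellA S ω else cellB S ω), D ω' * lhd S D f ϵ b M ω')

/-- The transcript (most recent message first) of the smoothed standard protocol after
`t` messages, on state `ω` with noise sequence `r`: the sender of message `t+1`
(Alice iff `t+1` is odd) sends `round(E) + 2^{-b}·r t`. -/
noncomputable def runT (S : Finset (St n)) (D f : St n → ℝ) (ϵ : ℝ) (b : ℕ)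
    (ω : St n) (r : ℕ → ℤ) : ℕ → List ℝ
  | 0 => []
  | t + 1 =>
    let M := runT S D f ϵ b ω r t
    (roundb b (postE S D f ϵ b (decide ((t + 1) % 2 = 1)) M ω) +
        (2 : ℝ) ^ (-(b : ℤ)) * (r t : ℝ)) :: M

/-- The triangular noise distribution on `{-L, …, L}`: `Pr[r = j] = (L - |j|)/L²`. -/
noncomputable def tri (L : ℕ) (j : ℤ) : ℝ :=
  if |j| ≤ (L : ℤ) then ((L : ℝ) - |(j : ℝ)|) / (L : ℝ) ^ 2 else 0

/-- Joint probability, over the prior `D` on states and the protocol's noise, that the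
state `ω` and the transcript `M_t` after `t` messages satisfy the predicate `P`. -/
noncomputable def jointP (S : Finset (St n)) (D f : St n → ℝ) (ϵ : ℝ) (b L : ℕ)
    (t : ℕ) (P : St n → List ℝ → Prop) : ℝ :=
  ∑ ω ∈ S, D ω *
    ∑ r ∈ Fintype.piFinset (fun _ : Fin t => Finset.Icc (-(L : ℤ)) (L : ℤ)),
      (∏ u, tri L (r u)) *
        (if P ω (runT S D f ϵ b ω (fun u => if h : u < t then r ⟨u, h⟩ else 0) t)
         then 1 else 0)

/-- The weight `q_u(Y, M_u)`: product of the triangular likelihoods of Bob's (even-step)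
messages in the transcript `M` (most recent message first), evaluated at state `Y`. -/
noncomputable def qwt (S : Finset (St n)) (D f : St n → ℝ) (ϵ : ℝ) (b : ℕ) :
    List ℝ → St n → ℝ
  | [], _ => 1
  | m :: M, Y =>
    qwt S D f ϵ b M Y *
      (if (M.length + 1) % 2 = 0 then Dlt ϵ b m (postE S D f ϵ b false M Y) else 1)

/-- `Q_u = E_{Y ~ D(·|Ω_A(x))}[q_u(Y, M_u)]`, as a function of Alice's input `x` and the
transcript `M` (most recent message first). -/
noncomputable def Qfun (S : Finset (St n)) (D f : St n → ℝ) (ϵ : ℝ) (b : ℕ)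
    (x : Fin n → Bool) (M : List ℝ) : ℝ :=
  (∑ Y ∈ S.filter (fun ω' => ω'.1 = x), D Y * qwt S D f ϵ b M Y) /
  (∑ Y ∈ S.filter (fun ω' => ω'.1 = x), D Y)

section Aux

variable {n : ℕ}

/-- grid points -/
def Grid (b : ℕ) (m : ℝ) : Prop := ∃ k : ℤ, m = (k : ℝ) * (2 : ℝ) ^ (-(b : ℤ))

lemma roundb_grid (b : ℕ) (z : ℝ) : Grid b (roundb b z) := ⟨_, rfl⟩

lemma Grid.add_mul (b : ℕ) {m : ℝ} (h : Grid b m) (j : ℤ) :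
    Grid b (m + (2 : ℝ) ^ (-(b : ℤ)) * (j : ℝ)) := by
  obtain ⟨k, rfl⟩ := h
  exact ⟨k + j, by push_cast; ring⟩

lemma runT_congr (S : Finset (St n)) (D f : St n → ℝ) (ϵ : ℝ) (b : ℕ)
    (ω : St n) (r r' : ℕ → ℤ) (t : ℕ) (h : ∀ u < t, r u = r' u) :
    runT S D f ϵ b ω r t = runT S D f ϵ b ω r' t := by
  induction t with
  | zero => rfl
  | succ t ih =>
    simp only [runT]
    rw [ih (fun u hu => h u (Nat.lt_succ_of_lt hu)), h t (Nat.lt_succ_self t)]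

lemma runT_length (S : Finset (St n)) (D f : St n → ℝ) (ϵ : ℝ) (b : ℕ)
    (ω : St n) (r : ℕ → ℤ) (t : ℕ) : (runT S D f ϵ b ω r t).length = t := by
  induction t with
  | zero => rfl
  | succ t ih => simp only [runT, List.length_cons, ih]

lemma runT_grid (S : Finset (St n)) (D f : St n → ℝ) (ϵ : ℝ) (b : ℕ)
    (ω : St n) (r : ℕ → ℤ) (t : ℕ) :
    ∀ m ∈ runT S D f ϵ b ω r t, Grid b m := by
  induction t with
  | zero => intro m hm; simp [runT] at hm
  | succ t ih =>
    intro m hm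
    simp only [runT, List.mem_cons] at hm
    rcases hm with rfl | hm
    · exact (roundb_grid b _).add_mul _ _
    · exact ih m hm

end Aux
section Aux2
variable {n : ℕ}

/-- probability of a given transcript after `t` messages from state `ω` -/
noncomputable def Prun (S : Finset (St n)) (D f : St n → ℝ) (ϵ : ℝ) (b L : ℕ)
    (ω : St n) (t : ℕ) (M : List ℝ) : ℝ :=
  ∑ r ∈ Fintype.piFinset (fun _ : Fin t => Finset.Icc (-(L : ℤ)) (L : ℤ)),
      (∏ u, tri L (r u)) *
        (if runT S D f ϵ b ω (fun u => if h : u < t then r ⟨u, h⟩ else 0) t = M then 1 else 0)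

lemma sum_piFinset_snoc {t : ℕ} (s : Finset ℤ) (F : (Fin (t + 1) → ℤ) → ℝ) :
    ∑ r ∈ Fintype.piFinset (fun _ : Fin (t + 1) => s), F r
      = ∑ r' ∈ Fintype.piFinset (fun _ : Fin t => s), ∑ j ∈ s, F (Fin.snoc r' j) := by
  rw [← Finset.sum_product']
  refine Finset.sum_nbij' (fun r => (fun u => r u.castSucc, r (Fin.last t)))
    (fun p => Fin.snoc p.1 p.2) ?_ ?_ ?_ ?_ ?_
  · intro r hr
    simp only [Fintype.mem_piFinset] at hr
    simp [Finset.mem_product, Fintype.mem_piFinset, hr]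
  · intro p hp
    simp only [Finset.mem_product, Fintype.mem_piFinset] at hp
    simp only [Fintype.mem_piFinset]
    intro u
    induction u using Fin.lastCases with
    | last => simpa using hp.2
    | cast i => simpa [Fin.snoc_castSucc] using hp.1 i
  · intro r hr
    funext u
    induction u using Fin.lastCases with
    | last => simp
    | cast i => simp
  · intro p hp
    simp
  · intro r hr
    congr 1
    funext u
    induction u using Fin.lastCases with
    | last => simp
    | cast i => simp

end Aux2
section Aux3
variable {n : ℕ} (S : Finset (St n)) (D f : St n → ℝ) (ϵ : ℝ) (b L : ℕ)

lemma lhd_cons (m : ℝ) (M : List ℝ) (ω : St n) :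
    lhd S D f ϵ b (m :: M) ω = lhd S D f ϵ b M ω *
      Dlt ϵ b m (postE S D f ϵ b (decide ((M.length + 1) % 2 = 1)) M ω) := by
  by_cases h : (M.length + 1) % 2 = 1 <;> simp [lhd, postE, h]

lemma Prun_zero (ω : St n) (M : List ℝ) :
    Prun S D f ϵ b L ω 0 M = if M = [] then 1 else 0 := by
  unfold Prun
  rw [Finset.sum_eq_single (fun u : Fin 0 => (0 : ℤ))]
  · simp [runT]
  · intro r hr hne
    exact absurd (funext fun u => u.elim0) hne
  · intro h
    exact absurd (Fintype.mem_piFinset.mpr fun u => u.elim0) h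

lemma Prun_succ_cons (ω : St n) (t : ℕ) (m : ℝ) (M : List ℝ) :
    Prun S D f ϵ b L ω (t + 1) (m :: M) =
      Prun S D f ϵ b L ω t M *
        ∑ j ∈ Finset.Icc (-(L : ℤ)) (L : ℤ),
          tri L j * (if roundb b (postE S D f ϵ b (decide ((t + 1) % 2 = 1)) M ω)
              + (2 : ℝ) ^ (-(b : ℤ)) * (j : ℝ) = m then 1 else 0) := by
  unfold Prun
  rw [sum_piFinset_snoc, Finset.sum_mul]
  refine Finset.sum_congr rfl fun r' hr' => ?_
  rw [Finset.mul_sum]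
  refine Finset.sum_congr rfl fun j hj => ?_
  have hprod : (∏ u : Fin (t + 1), tri L ((Fin.snoc r' j : Fin (t + 1) → ℤ) u))
      = (∏ u : Fin t, tri L (r' u)) * tri L j := by
    rw [Fin.prod_univ_castSucc]
    simp
  have hrun : runT S D f ϵ b ω
        (fun u => if h : u < t + 1 then (Fin.snoc r' j : Fin (t + 1) → ℤ) ⟨u, h⟩ else 0) (t + 1)
      = (roundb b (postE S D f ϵ b (decide ((t + 1) % 2 = 1))
            (runT S D f ϵ b ω (fun u => if h : u < t then r' ⟨u, h⟩ else 0) t) ω)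
          + (2 : ℝ) ^ (-(b : ℤ)) * (j : ℝ))
        :: runT S D f ϵ b ω (fun u => if h : u < t then r' ⟨u, h⟩ else 0) t := by
    have h1 : runT S D f ϵ b ω
          (fun u => if h : u < t + 1 then (Fin.snoc r' j : Fin (t + 1) → ℤ) ⟨u, h⟩ else 0) t
        = runT S D f ϵ b ω (fun u => if h : u < t then r' ⟨u, h⟩ else 0) t := by
      apply runT_congr
      intro u hu
      simp only [dif_pos hu, dif_pos (Nat.lt_succ_of_lt hu)]
      have he : (⟨u, Nat.lt_succ_of_lt hu⟩ : Fin (t + 1)) = (⟨u, hu⟩ : Fin t).castSucc := rfl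
      rw [he, Fin.snoc_castSucc]
    have h2 : (if h : t < t + 1 then (Fin.snoc r' j : Fin (t + 1) → ℤ) ⟨t, h⟩ else (0 : ℤ)) = j := by
      simp only [dif_pos (Nat.lt_succ_self t)]
      have he : (⟨t, Nat.lt_succ_self t⟩ : Fin (t + 1)) = Fin.last t := rfl
      rw [he, Fin.snoc_last]
    simp only [runT]
    rw [h1, h2]
  rw [hprod, hrun]
  set R := runT S D f ϵ b ω (fun u => if h : u < t then r' ⟨u, h⟩ else 0) t with hR
  by_cases h : R = M
  · rw [h]
    by_cases h2 : roundb b (postE S D f ϵ b (decide ((t + 1) % 2 = 1)) M ω)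
        + (2 : ℝ) ^ (-(b : ℤ)) * (j : ℝ) = m <;> simp [h2] <;> ring
  · have hne : ¬ ((roundb b (postE S D f ϵ b (decide ((t + 1) % 2 = 1)) R ω)
        + (2 : ℝ) ^ (-(b : ℤ)) * (j : ℝ)) :: R = m :: M) := by
      simp [h]
    simp [h, hne]

end Aux3
section Aux4
variable {n : ℕ} (S : Finset (St n)) (D f : St n → ℝ)

lemma sum_tri_ind {ϵ : ℝ} {b L : ℕ} (hϵ : 0 < ϵ) (hL : (L : ℝ) = 2 ^ b * ϵ)
    {m : ℝ} (hm : Grid b m) (E : ℝ) :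
    ∑ j ∈ Finset.Icc (-(L : ℤ)) (L : ℤ),
        tri L j * (if roundb b E + (2 : ℝ) ^ (-(b : ℤ)) * (j : ℝ) = m then 1 else 0)
      = Dlt ϵ b m E / L := by
  obtain ⟨k, rfl⟩ := hm
  have h2b : (0 : ℝ) < (2 : ℝ) ^ (-(b : ℤ)) := by positivity
  have hϵL : ϵ = (L : ℝ) * (2 : ℝ) ^ (-(b : ℤ)) := by
    rw [hL, zpow_neg, zpow_natCast]
    field_simp
  set k' : ℤ := ⌊E * 2 ^ b + 1 / 2⌋ with hk'
  have hround : roundb b E = (k' : ℝ) * (2 : ℝ) ^ (-(b : ℤ)) := rfl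
  have hcond : ∀ j : ℤ, (roundb b E + (2 : ℝ) ^ (-(b : ℤ)) * (j : ℝ)
      = (k : ℝ) * (2 : ℝ) ^ (-(b : ℤ))) ↔ j = k - k' := by
    intro j
    rw [hround]
    constructor
    · intro h
      have h1 : ((k' + j : ℤ) : ℝ) * (2 : ℝ) ^ (-(b : ℤ)) = (k : ℝ) * (2 : ℝ) ^ (-(b : ℤ)) := by
        push_cast; linarith [h]
      have h2 := mul_right_cancel₀ (ne_of_gt h2b) h1
      have h3 : (k' + j : ℤ) = k := by exact_mod_cast h2
      omega
    · intro h
      subst h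
      push_cast
      ring
  have hsum : ∑ j ∈ Finset.Icc (-(L : ℤ)) (L : ℤ),
        tri L j * (if roundb b E + (2 : ℝ) ^ (-(b : ℤ)) * (j : ℝ)
          = (k : ℝ) * (2 : ℝ) ^ (-(b : ℤ)) then 1 else 0)
      = if (k - k') ∈ Finset.Icc (-(L : ℤ)) (L : ℤ) then tri L (k - k') else 0 := by
    rw [← Finset.sum_ite_eq' (Finset.Icc (-(L : ℤ)) (L : ℤ)) (k - k') (fun j => tri L j)]
    refine Finset.sum_congr rfl fun j hj => ?_
    by_cases h : j = k - k'
    · rw [if_pos ((hcond j).mpr h), if_pos h, mul_one, h]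
    · rw [if_neg (fun hc => h ((hcond j).mp hc)), if_neg h, mul_zero]
  rw [hsum]
  have habs : |(k : ℝ) * (2 : ℝ) ^ (-(b : ℤ)) - roundb b E|
      = |((k - k' : ℤ) : ℝ)| * (2 : ℝ) ^ (-(b : ℤ)) := by
    rw [hround, ← sub_mul, abs_mul, abs_of_pos h2b]
    push_cast
    ring_nf
  rw [Dlt, habs]
  by_cases hin : (k - k') ∈ Finset.Icc (-(L : ℤ)) (L : ℤ)
  · have hle : |k - k'| ≤ (L : ℤ) := abs_le.mpr (Finset.mem_Icc.mp hin)
    have hleR : |((k - k' : ℤ) : ℝ)| ≤ (L : ℝ) := by exact_mod_cast hle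
    have hcondR : |((k - k' : ℤ) : ℝ)| * (2 : ℝ) ^ (-(b : ℤ)) ≤ ϵ := by
      rw [hϵL]
      exact mul_le_mul_of_nonneg_right hleR h2b.le
    rw [if_pos hin, if_pos hcondR, tri, if_pos hle]
    have hLpos : (0 : ℝ) < (L : ℝ) := by rw [hL]; positivity
    have hdiv : |((k - k' : ℤ) : ℝ)| * (2 : ℝ) ^ (-(b : ℤ)) / ϵ = |((k - k' : ℤ) : ℝ)| / L := by
      rw [hϵL]
      field_simp
    rw [hdiv, pow_two, ← div_div, sub_div, div_self (ne_of_gt hLpos)]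
  · have hmem := Finset.mem_Icc.not.mp hin
    have hgt : (L : ℤ) < |k - k'| := by
      rcases lt_or_ge (L : ℤ) |k - k'| with h | h
      · exact h
      · exact absurd (abs_le.mp h) hmem
    have hgtR : (L : ℝ) < |((k - k' : ℤ) : ℝ)| := by exact_mod_cast hgt
    have hcondR : ¬ (|((k - k' : ℤ) : ℝ)| * (2 : ℝ) ^ (-(b : ℤ)) ≤ ϵ) := by
      rw [hϵL, not_le]
      exact mul_lt_mul_of_pos_right hgtR h2b
    rw [if_neg hin, if_neg hcondR, zero_div]

end Aux4
section Aux5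
variable {n : ℕ} (S : Finset (St n)) (D f : St n → ℝ)

lemma Prun_eq_lhd {ϵ : ℝ} {b L : ℕ} (hϵ : 0 < ϵ) (hL : (L : ℝ) = 2 ^ b * ϵ)
    (ω : St n) (M : List ℝ) (hg : ∀ m ∈ M, Grid b m) :
    Prun S D f ϵ b L ω M.length M = lhd S D f ϵ b M ω / (L : ℝ) ^ M.length := by
  induction M with
  | nil => simp [Prun_zero, lhd]
  | cons m M ih =>
    have hgM : ∀ m' ∈ M, Grid b m' := fun m' hm' => hg m' (List.mem_cons_of_mem _ hm')
    have hgm : Grid b m := hg m List.mem_cons_self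
    rw [List.length_cons, Prun_succ_cons, ih hgM,
      sum_tri_ind hϵ hL hgm, lhd_cons]
    have hLpos : (0 : ℝ) < (L : ℝ) := by rw [hL]; positivity
    rw [pow_succ]
    field_simp

/-- Alice's part of the likelihood -/
noncomputable def awt (S : Finset (St n)) (D f : St n → ℝ) (ϵ : ℝ) (b : ℕ) :
    List ℝ → St n → ℝ
  | [], _ => 1
  | m :: M, ω =>
    awt S D f ϵ b M ω *
      (if (M.length + 1) % 2 = 1 then Dlt ϵ b m (postE S D f ϵ b true M ω) else 1)

lemma lhd_eq_awt_qwt (ϵ : ℝ) (b : ℕ) (M : List ℝ) (ω : St n) :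
    lhd S D f ϵ b M ω = awt S D f ϵ b M ω * qwt S D f ϵ b M ω := by
  induction M with
  | nil => simp [lhd, awt, qwt]
  | cons m M ih =>
    rw [lhd_cons, awt, qwt, ih]
    by_cases h : (M.length + 1) % 2 = 1
    · have h0 : ¬ ((M.length + 1) % 2 = 0) := by omega
      simp only [if_pos h, if_neg h0, mul_one]
      have : decide ((M.length + 1) % 2 = 1) = true := by simp [h]
      rw [this]
      ring
    · have h0 : (M.length + 1) % 2 = 0 := by omega
      simp only [if_neg h, if_pos h0, mul_one]
      have : decide ((M.length + 1) % 2 = 1) = false := by simp [h]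
      rw [this]
      ring

lemma awt_congr (ϵ : ℝ) (b : ℕ) (M : List ℝ) (ω ω' : St n) (h : ω.1 = ω'.1) :
    awt S D f ϵ b M ω = awt S D f ϵ b M ω' := by
  have hcell : cellA S ω = cellA S ω' := by
    unfold cellA
    simp [h]
  induction M with
  | nil => rfl
  | cons m M ih =>
    rw [awt, awt, ih]
    congr 2
    unfold postE
    simp [hcell]

lemma jointP_eq_sum (ϵ : ℝ) (b L : ℕ) (x : Fin n → Bool) (t : ℕ) (M₁ : List ℝ) :
    jointP S D f ϵ b L t (fun ω M => ω.1 = x ∧ M = M₁)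
      = ∑ ω ∈ S.filter (fun ω => ω.1 = x), D ω * Prun S D f ϵ b L ω t M₁ := by
  unfold jointP Prun
  rw [Finset.sum_filter]
  refine Finset.sum_congr rfl fun ω _ => ?_
  by_cases h : ω.1 = x
  · simp [h]
  · simp [h]

end Aux5
section Aux6
variable {n : ℕ} (S : Finset (St n)) (D f : St n → ℝ)

lemma Dlt_nonneg {ϵ : ℝ} (hϵ : 0 < ϵ) (b : ℕ) (m E : ℝ) : 0 ≤ Dlt ϵ b m E := by
  unfold Dlt
  split
  · rename_i h
    have h0 : 0 ≤ |m - roundb b E| := abs_nonneg _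
    have : |m - roundb b E| / ϵ ≤ 1 := by
      rw [div_le_one hϵ]; exact h
    linarith
  · exact le_refl 0

lemma lhd_nonneg {ϵ : ℝ} (hϵ : 0 < ϵ) (b : ℕ) (M : List ℝ) (ω : St n) :
    0 ≤ lhd S D f ϵ b M ω := by
  induction M with
  | nil => simp [lhd]
  | cons m M ih => rw [lhd_cons]; exact mul_nonneg ih (Dlt_nonneg hϵ _ _ _)

lemma qwt_nonneg {ϵ : ℝ} (hϵ : 0 < ϵ) (b : ℕ) (M : List ℝ) (ω : St n) :
    0 ≤ qwt S D f ϵ b M ω := by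
  induction M with
  | nil => simp [qwt]
  | cons m M ih =>
    rw [qwt]
    refine mul_nonneg ih ?_
    split
    · exact Dlt_nonneg hϵ _ _ _
    · exact zero_le_one

lemma awt_nonneg {ϵ : ℝ} (hϵ : 0 < ϵ) (b : ℕ) (M : List ℝ) (ω : St n) :
    0 ≤ awt S D f ϵ b M ω := by
  induction M with
  | nil => simp [awt]
  | cons m M ih =>
    rw [awt]
    refine mul_nonneg ih ?_
    split
    · exact Dlt_nonneg hϵ _ _ _
    · exact zero_le_one

lemma postE_mem {ϵ : ℝ} (hϵ : 0 < ϵ) (b : ℕ) (hD : ∀ ω ∈ S, 0 ≤ D ω)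
    (hf : ∀ ω, f ω ∈ Set.Icc (0 : ℝ) 1) (al : Bool) (M : List ℝ) (ω : St n) :
    postE S D f ϵ b al M ω ∈ Set.Icc (0 : ℝ) 1 := by
  unfold postE
  set c := if al then cellA S ω else cellB S ω with hc
  have hsub : c ⊆ S := by
    rw [hc]; split <;> exact Finset.filter_subset _ _
  have hterm : ∀ ω' ∈ c, 0 ≤ D ω' * lhd S D f ϵ b M ω' :=
    fun ω' h => mul_nonneg (hD ω' (hsub h)) (lhd_nonneg S D f hϵ b M ω')
  have hnum0 : 0 ≤ ∑ ω' ∈ c, D ω' * lhd S D f ϵ b M ω' * f ω' :=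
    Finset.sum_nonneg fun ω' h => mul_nonneg (hterm ω' h) (hf ω').1
  have hden0 : 0 ≤ ∑ ω' ∈ c, D ω' * lhd S D f ϵ b M ω' :=
    Finset.sum_nonneg hterm
  have hnd : (∑ ω' ∈ c, D ω' * lhd S D f ϵ b M ω' * f ω')
      ≤ ∑ ω' ∈ c, D ω' * lhd S D f ϵ b M ω' := by
    refine Finset.sum_le_sum fun ω' h => ?_
    calc D ω' * lhd S D f ϵ b M ω' * f ω' ≤ D ω' * lhd S D f ϵ b M ω' * 1 :=
          mul_le_mul_of_nonneg_left (hf ω').2 (hterm ω' h)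
      _ = D ω' * lhd S D f ϵ b M ω' := mul_one _
  rcases eq_or_lt_of_le hden0 with h | h
  · have : (∑ ω' ∈ c, D ω' * lhd S D f ϵ b M ω' * f ω') = 0 :=
      le_antisymm (by rw [← h] at hnd; exact hnd) hnum0
    rw [this, zero_div]
    exact ⟨le_refl 0, zero_le_one⟩
  · exact ⟨div_nonneg hnum0 h.le, (div_le_one h).mpr hnd⟩

lemma floor_round_bound {z : ℝ} (b : ℕ) (hz : z ∈ Set.Icc (0 : ℝ) 1) :
    0 ≤ ⌊z * 2 ^ b + 1 / 2⌋ ∧ ⌊z * 2 ^ b + 1 / 2⌋ ≤ 2 ^ b := by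
  constructor
  · apply Int.floor_nonneg.mpr
    have : (0 : ℝ) ≤ z * 2 ^ b := mul_nonneg hz.1 (by positivity)
    linarith
  · have h1 : z * 2 ^ b + 1 / 2 < ((2 ^ b : ℤ) : ℝ) + 1 := by
      push_cast
      have : z * 2 ^ b ≤ 1 * 2 ^ b := mul_le_mul_of_nonneg_right hz.2 (by positivity)
      linarith
    have h2 : ⌊z * 2 ^ b + 1 / 2⌋ < 2 ^ b + 1 := Int.floor_lt.mpr (by push_cast; push_cast at h1; linarith)
    omega

end Aux6
section Aux7
variable {n : ℕ} (S : Finset (St n)) (D f : St n → ℝ)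

lemma jointP_formula {ϵ : ℝ} {b L : ℕ} (hϵ : 0 < ϵ) (hL : (L : ℝ) = 2 ^ b * ϵ)
    (x : Fin n → Bool) (M₁ : List ℝ) (hg : ∀ m ∈ M₁, Grid b m) :
    jointP S D f ϵ b L M₁.length (fun ω M => ω.1 = x ∧ M = M₁)
      = awt S D f ϵ b M₁ (x, fun _ => false) *
          (∑ ω ∈ S.filter (fun ω => ω.1 = x), D ω * qwt S D f ϵ b M₁ ω)
          / (L : ℝ) ^ M₁.length := by
  rw [jointP_eq_sum]
  have step : ∀ ω ∈ S.filter (fun ω => ω.1 = x),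
      D ω * Prun S D f ϵ b L ω M₁.length M₁
        = awt S D f ϵ b M₁ (x, fun _ => false) * (D ω * qwt S D f ϵ b M₁ ω)
            / (L : ℝ) ^ M₁.length := by
    intro ω hω
    have hx : ω.1 = x := (Finset.mem_filter.mp hω).2
    rw [Prun_eq_lhd S D f hϵ hL ω M₁ hg, lhd_eq_awt_qwt,
      awt_congr S D f ϵ b M₁ ω (x, fun _ => false) hx]
    ring
  rw [Finset.sum_congr rfl step, ← Finset.sum_div, ← Finset.mul_sum]

end Aux7
/-- for even `t`, conditioned on Alice's input `x` and a
positive-probability transcript `M₀ = M_{t-1}`, the `t`-th message satisfies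
`Pr[m_t = m] = (1/L)·Q_t(m)/Q_{t-2}`, and `Pr[Q_t/Q_{t-2} ≤ γϵ/2] < γ`
("unlikely messages are unlikely"). -/
theorem stmt_13 (n : ℕ) (S : Finset (St n)) (hS : S.Nonempty)
    (D : St n → ℝ) (hD : ∀ ω ∈ S, 0 < D ω) (hD0 : ∀ ω ∉ S, D ω = 0)
    (hDsum : ∑ ω ∈ S, D ω = 1)
    (f : St n → ℝ) (hf : ∀ ω, f ω ∈ Set.Icc (0 : ℝ) 1)
    (ε : ℝ) (hε : ε ∈ Set.Ioo (0 : ℝ) 1)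
    (b : ℕ) (hb : Real.logb 2 (200 / ε) ≤ (b : ℝ))
    (ϵ : ℝ) (hϵmul : ∃ k : ℤ, ϵ = (k : ℝ) * (2 : ℝ) ^ (-(b : ℤ)))
    (hϵlo : ε / 50 ≤ ϵ) (hϵhi : ϵ ≤ ε / 40)
    (L : ℕ) (hL : (L : ℝ) = 2 ^ b * ϵ)
    (x : Fin n → Bool) (t : ℕ) (ht : t % 2 = 0) (htpos : 0 < t)
    (M₀ : List ℝ) (hlen : M₀.length = t - 1)
    (hpos : 0 < jointP S D f ϵ b L (t - 1) (fun ω M => ω.1 = x ∧ M = M₀)) :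
    (∀ m : ℝ, (∃ k : ℤ, m = (k : ℝ) * (2 : ℝ) ^ (-(b : ℤ))) →
      jointP S D f ϵ b L t (fun ω M => ω.1 = x ∧ M = m :: M₀) /
          jointP S D f ϵ b L (t - 1) (fun ω M => ω.1 = x ∧ M = M₀) =
        (1 / (L : ℝ)) * (Qfun S D f ϵ b x (m :: M₀) / Qfun S D f ϵ b x M₀.tail)) ∧
    (∀ γ : ℝ, 0 < γ →
      jointP S D f ϵ b L t (fun ω M => ω.1 = x ∧ M.tail = M₀ ∧
            Qfun S D f ϵ b x M / Qfun S D f ϵ b x M₀.tail ≤ γ * ϵ / 2) /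
          jointP S D f ϵ b L (t - 1) (fun ω M => ω.1 = x ∧ M = M₀) < γ) := by
  have hϵ0 : 0 < ϵ := lt_of_lt_of_le (by linarith [hε.1]) hϵlo
  have hLR : (0 : ℝ) < (L : ℝ) := by rw [hL]; positivity
  have hLne : (L : ℝ) ≠ 0 := ne_of_gt hLR
  have hL1 : (1 : ℝ) ≤ (L : ℝ) := by
    have : L ≠ 0 := by exact_mod_cast ne_of_gt hLR
    exact_mod_cast Nat.one_le_iff_ne_zero.mpr this
  obtain ⟨u, rfl⟩ : ∃ u, t = u + 2 := ⟨t - 2, by omega⟩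
  have h21 : u + 2 - 1 = u + 1 := rfl
  rw [h21] at hpos ⊢
  have hlen' : M₀.length = u + 1 := by omega
  have hueven : u % 2 = 0 := by omega
  -- extract a witness state and the grid property of M₀ from positivity
  have hne := ne_of_gt hpos
  unfold jointP at hne
  beta_reduce at hne
  obtain ⟨ω₁, hω₁S, h₁⟩ := Finset.exists_ne_zero_of_sum_ne_zero hne
  obtain ⟨r₁, hr₁, h₃⟩ := Finset.exists_ne_zero_of_sum_ne_zero
    (fun h => h₁ (mul_eq_zero_of_right _ h))
  have hcond : ω₁.1 = x ∧ runT S D f ϵ b ω₁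
      (fun v => if h : v < u + 1 then r₁ ⟨v, h⟩ else 0) (u + 1) = M₀ := by
    by_contra hc
    apply h₃
    rw [if_neg hc, mul_zero]
  have hgrid₀ : ∀ m' ∈ M₀, Grid b m' := by
    rw [← hcond.2]
    exact runT_grid S D f ϵ b ω₁ _ (u + 1)
  have hAne : (S.filter (fun ω => ω.1 = x)).Nonempty :=
    ⟨ω₁, Finset.mem_filter.mpr ⟨hω₁S, hcond.1⟩⟩
  have hSD : 0 < ∑ ω ∈ S.filter (fun ω => ω.1 = x), D ω :=
    Finset.sum_pos (fun ω hω => hD ω (Finset.mem_filter.mp hω).1) hAne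
  set SD := ∑ ω ∈ S.filter (fun ω => ω.1 = x), D ω with hSDdef
  set ωx : St n := (x, fun _ => false) with hωxdef
  set A0 := awt S D f ϵ b M₀ ωx with hA0def
  set Dq := ∑ ω ∈ S.filter (fun ω => ω.1 = x), D ω * qwt S D f ϵ b M₀ ω with hDqdef
  -- the denominator formula
  have hden : jointP S D f ϵ b L (u + 1) (fun ω M => ω.1 = x ∧ M = M₀)
      = A0 * Dq / (L : ℝ) ^ (u + 1) := by
    have h := jointP_formula S D f hϵ0 hL x M₀ hgrid₀
    rw [hlen'] at h
    exact h
  have hpos' : 0 < A0 * Dq / (L : ℝ) ^ (u + 1) := by rw [← hden]; exact hpos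
  have hA0nn : 0 ≤ A0 := awt_nonneg S D f hϵ0 b M₀ ωx
  have hDqnn : 0 ≤ Dq := Finset.sum_nonneg fun ω hω =>
    mul_nonneg (hD ω (Finset.mem_filter.mp hω).1).le (qwt_nonneg S D f hϵ0 b M₀ ω)
  have hADpos : 0 < A0 * Dq := by
    have hp : (0 : ℝ) < (L : ℝ) ^ (u + 1) := by positivity
    have := (div_pos_iff.mp hpos')
    rcases this with ⟨h1, _⟩ | ⟨_, h2⟩
    · exact h1
    · linarith
  have hA0pos : 0 < A0 := by nlinarith [hADpos, hA0nn, hDqnn]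
  have hDqpos : 0 < Dq := by nlinarith [hADpos, hA0nn, hDqnn]
  -- destruct M₀
  obtain ⟨m₁, tl, rfl⟩ : ∃ m₁ tl, M₀ = m₁ :: tl := by
    cases M₀ with
    | nil => simp at hlen'
    | cons a l => exact ⟨a, l, rfl⟩
  have htllen : tl.length = u := by simpa using hlen'
  have hqtail : ∀ Y, qwt S D f ϵ b (m₁ :: tl) Y = qwt S D f ϵ b tl Y := by
    intro Y
    rw [qwt, if_neg (by omega : ¬ (tl.length + 1) % 2 = 0), mul_one]
  have hQtail : Qfun S D f ϵ b x tl = Dq / SD := by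
    unfold Qfun
    rw [hDqdef, hSDdef]
    congr 1
    exact Finset.sum_congr rfl fun Y _ => by rw [hqtail Y]
  have hQtailpos : 0 < Qfun S D f ϵ b x tl := by
    rw [hQtail]; exact div_pos hDqpos hSD
  -- formula for the numerator for any grid message m
  have hnum : ∀ m : ℝ, Grid b m →
      jointP S D f ϵ b L (u + 2) (fun ω M => ω.1 = x ∧ M = m :: m₁ :: tl)
        = A0 * (∑ ω ∈ S.filter (fun ω => ω.1 = x),
            D ω * qwt S D f ϵ b (m :: m₁ :: tl) ω) / (L : ℝ) ^ (u + 2) := by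
    intro m hm
    have hg : ∀ m' ∈ m :: m₁ :: tl, Grid b m' := by
      intro m' hm'
      rcases List.mem_cons.mp hm' with rfl | h
      · exact hm
      · exact hgrid₀ m' h
    have h := jointP_formula S D f hϵ0 hL x (m :: m₁ :: tl) hg
    have hlc : (m :: m₁ :: tl).length = u + 2 := by simp [htllen]
    rw [hlc] at h
    rw [h]
    congr 2
    rw [awt, if_neg (by simp [htllen]; omega : ¬ ((m₁ :: tl).length + 1) % 2 = 1), mul_one]
  have hQm : ∀ m : ℝ, Qfun S D f ϵ b x (m :: m₁ :: tl)
      = (∑ ω ∈ S.filter (fun ω => ω.1 = x), D ω * qwt S D f ϵ b (m :: m₁ :: tl) ω) / SD := by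
    intro m; rfl
  constructor
  · -- Part 1
    intro m hm
    rw [hnum m hm, hden, hQm m, List.tail_cons, hQtail]
    have hpow : (L : ℝ) ^ (u + 2) = (L : ℝ) ^ (u + 1) * L := pow_succ _ _
    rw [hpow]
    field_simp
  · -- Part 2
    intro γ hγ
    simp only [List.tail_cons]
    obtain ⟨c, hcR, hcZ⟩ : ∃ c : ℕ, ((c : ℝ) = 2 ^ b ∧ (c : ℤ) = 2 ^ b) :=
      ⟨2 ^ b, by push_cast; rfl, by push_cast; rfl⟩
    set K : Finset ℤ := Finset.Icc (-(L : ℤ)) ((c : ℤ) + L) with hK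
    set Mset : Finset ℝ := K.image (fun k : ℤ => (k : ℝ) * (2 : ℝ) ^ (-(b : ℤ))) with hMset
    set Mbad : Finset ℝ := Mset.filter
      (fun m => Qfun S D f ϵ b x (m :: m₁ :: tl) / Qfun S D f ϵ b x tl ≤ γ * ϵ / 2) with hMbad
    have hD' : ∀ ω ∈ S, 0 ≤ D ω := fun ω h => (hD ω h).le
    have hdecomp : jointP S D f ϵ b L (u + 2) (fun ω M => ω.1 = x ∧ M.tail = m₁ :: tl ∧
          Qfun S D f ϵ b x M / Qfun S D f ϵ b x tl ≤ γ * ϵ / 2)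
        = ∑ m ∈ Mbad, jointP S D f ϵ b L (u + 2)
            (fun ω M => ω.1 = x ∧ M = m :: m₁ :: tl) := by
      unfold jointP
      conv_rhs => rw [Finset.sum_comm]
      refine Finset.sum_congr rfl fun ω hω => ?_
      conv_rhs => rw [← Finset.mul_sum]
      congr 1
      conv_rhs => rw [Finset.sum_comm]
      refine Finset.sum_congr rfl fun r hr => ?_
      conv_rhs => rw [← Finset.mul_sum]
      congr 1
      beta_reduce
      -- pointwise indicator decomposition
      have hu2 : u + 1 < u + 2 := by omega
      have hrs : runT S D f ϵ b ω (fun v => if h : v < u + 2 then r ⟨v, h⟩ else 0) (u + 2)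
          = (roundb b (postE S D f ϵ b (decide ((u + 1 + 1) % 2 = 1))
                (runT S D f ϵ b ω (fun v => if h : v < u + 2 then r ⟨v, h⟩ else 0) (u + 1)) ω)
              + (2 : ℝ) ^ (-(b : ℤ)) *
                (Int.cast (if h : u + 1 < u + 2 then r ⟨u + 1, h⟩ else (0 : ℤ)) : ℝ))
            :: runT S D f ϵ b ω (fun v => if h : v < u + 2 then r ⟨v, h⟩ else 0) (u + 1) := rfl
      have hRv : (if h : u + 1 < u + 2 then r ⟨u + 1, h⟩ else (0 : ℤ))
          = r ⟨u + 1, hu2⟩ := dif_pos _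
      have hrIcc : r ⟨u + 1, hu2⟩ ∈ Finset.Icc (-(L : ℤ)) (L : ℤ) :=
        Fintype.mem_piFinset.mp hr _
      rw [Finset.mem_Icc] at hrIcc
      by_cases hP : (ω.1 = x ∧
          (runT S D f ϵ b ω (fun v => if h : v < u + 2 then r ⟨v, h⟩ else 0) (u + 2)).tail
            = m₁ :: tl ∧
          Qfun S D f ϵ b x
              (runT S D f ϵ b ω (fun v => if h : v < u + 2 then r ⟨v, h⟩ else 0) (u + 2)) /
            Qfun S D f ϵ b x tl ≤ γ * ϵ / 2)
      · rw [if_pos hP]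
        obtain ⟨hx1, htail, hQc⟩ := hP
        rw [hrs, List.tail_cons] at htail
        rw [hrs, htail, hRv] at hQc ⊢
        set z := postE S D f ϵ b (decide ((u + 1 + 1) % 2 = 1)) (m₁ :: tl) ω with hz
        set hd := roundb b z + (2 : ℝ) ^ (-(b : ℤ)) * (Int.cast (r ⟨u + 1, hu2⟩) : ℝ) with hhd
        have hmem : hd ∈ Mbad := by
          refine Finset.mem_filter.mpr ⟨?_, hQc⟩
          obtain ⟨hk0, hk1⟩ := floor_round_bound b
            (show z ∈ Set.Icc (0 : ℝ) 1 from
              postE_mem S D f hϵ0 b hD' hf (decide ((u + 1 + 1) % 2 = 1)) (m₁ :: tl) ω)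
          refine Finset.mem_image.mpr ⟨⌊z * 2 ^ b + 1 / 2⌋ + r ⟨u + 1, hu2⟩, ?_, ?_⟩
          · rw [hK, Finset.mem_Icc, hcZ]
            omega
          · rw [hhd, roundb]
            push_cast
            ring
        symm
        rw [Finset.sum_eq_single_of_mem hd hmem]
        · rw [if_pos ⟨hx1, rfl⟩]
        · intro i hi hne
          rw [if_neg]
          rintro ⟨-, hcc⟩
          injection hcc with hc1 _
          exact hne hc1.symm
      · rw [if_neg hP]
        symm
        apply Finset.sum_eq_zero
        intro m hm
        rw [if_neg]
        rintro ⟨hx1, heq⟩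
        refine hP ⟨hx1, by rw [heq, List.tail_cons], ?_⟩
        rw [heq]
        exact (Finset.mem_filter.mp hm).2
    have hptub : ∀ m ∈ Mbad,
        jointP S D f ϵ b L (u + 2) (fun ω M => ω.1 = x ∧ M = m :: m₁ :: tl)
          ≤ γ * ϵ / 2 * (A0 * Dq) / (L : ℝ) ^ (u + 2) := by
      intro m hm
      obtain ⟨hmM, hQb⟩ := Finset.mem_filter.mp hm
      have hgrid : Grid b m := by
        obtain ⟨k, -, hk⟩ := Finset.mem_image.mp hmM
        exact ⟨k, hk.symm⟩
      rw [hnum m hgrid]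
      have h1 : Qfun S D f ϵ b x (m :: m₁ :: tl) ≤ γ * ϵ / 2 * Qfun S D f ϵ b x tl :=
        (div_le_iff₀ hQtailpos).mp hQb
      rw [hQm m, hQtail] at h1
      have hNm : (∑ ω ∈ S.filter (fun ω => ω.1 = x), D ω * qwt S D f ϵ b (m :: m₁ :: tl) ω)
          ≤ γ * ϵ / 2 * Dq := by
        have h2 := mul_le_mul_of_nonneg_right h1 hSD.le
        rw [div_mul_cancel₀ _ (ne_of_gt hSD)] at h2
        calc (∑ ω ∈ S.filter (fun ω => ω.1 = x), D ω * qwt S D f ϵ b (m :: m₁ :: tl) ω)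
            ≤ γ * ϵ / 2 * (Dq / SD) * SD := h2
          _ = γ * ϵ / 2 * Dq := by field_simp
      have hp : (0 : ℝ) < (L : ℝ) ^ (u + 2) := by positivity
      rw [div_le_div_iff₀ hp hp]
      have h4 := mul_le_mul_of_nonneg_left hNm hA0nn
      have h5 : A0 * (∑ ω ∈ S.filter (fun ω => ω.1 = x), D ω * qwt S D f ϵ b (m :: m₁ :: tl) ω)
          ≤ γ * ϵ / 2 * (A0 * Dq) := by linarith
      exact mul_le_mul_of_nonneg_right h5 hp.le
    have hsum : jointP S D f ϵ b L (u + 2) (fun ω M => ω.1 = x ∧ M.tail = m₁ :: tl ∧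
          Qfun S D f ϵ b x M / Qfun S D f ϵ b x tl ≤ γ * ϵ / 2)
        ≤ (Mbad.card : ℝ) * (γ * ϵ / 2 * (A0 * Dq) / (L : ℝ) ^ (u + 2)) := by
      rw [hdecomp]
      calc (∑ m ∈ Mbad, jointP S D f ϵ b L (u + 2)
              (fun ω M => ω.1 = x ∧ M = m :: m₁ :: tl))
          ≤ ∑ _m ∈ Mbad, γ * ϵ / 2 * (A0 * Dq) / (L : ℝ) ^ (u + 2) :=
            Finset.sum_le_sum hptub
        _ = (Mbad.card : ℝ) * (γ * ϵ / 2 * (A0 * Dq) / (L : ℝ) ^ (u + 2)) := by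
            rw [Finset.sum_const, nsmul_eq_mul]
    have hcardN : Mbad.card ≤ c + 2 * L + 1 := by
      have h1 : Mbad.card ≤ K.card :=
        le_trans (Finset.card_filter_le _ _) Finset.card_image_le
      have h2 : K.card = c + 2 * L + 1 := by
        rw [hK, Int.card_Icc]
        omega
      omega
    have hcard : (Mbad.card : ℝ) ≤ (c : ℝ) + 2 * L + 1 := by exact_mod_cast hcardN
    have hϵ40 : ϵ ≤ 1 / 40 := by
      have := hε.2
      linarith
    have hcϵ : (c : ℝ) * ϵ = (L : ℝ) := by rw [hcR, ← hL]
    have hkey : (Mbad.card : ℝ) * ϵ < 2 * L := by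
      have h1 : (Mbad.card : ℝ) * ϵ ≤ ((c : ℝ) + 2 * L + 1) * ϵ :=
        mul_le_mul_of_nonneg_right hcard hϵ0.le
      have h2 : 2 * (L : ℝ) * ϵ ≤ 2 * L * (1 / 40) :=
        mul_le_mul_of_nonneg_left hϵ40 (by positivity)
      have h3 : ((c : ℝ) + 2 * L + 1) * ϵ = (c : ℝ) * ϵ + 2 * L * ϵ + ϵ := by ring
      linarith [h1, h2, h3, hcϵ, hL1, hϵ40]
    rw [div_lt_iff₀ hpos]
    have hfac : (0 : ℝ) < γ * (A0 * Dq) / (2 * (L : ℝ) ^ (u + 2)) :=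
      div_pos (mul_pos hγ hADpos) (by positivity)
    calc jointP S D f ϵ b L (u + 2) (fun ω M => ω.1 = x ∧ M.tail = m₁ :: tl ∧
            Qfun S D f ϵ b x M / Qfun S D f ϵ b x tl ≤ γ * ϵ / 2)
        ≤ (Mbad.card : ℝ) * (γ * ϵ / 2 * (A0 * Dq) / (L : ℝ) ^ (u + 2)) := hsum
      _ = ((Mbad.card : ℝ) * ϵ) * (γ * (A0 * Dq) / (2 * (L : ℝ) ^ (u + 2))) := by ring
      _ < (2 * L) * (γ * (A0 * Dq) / (2 * (L : ℝ) ^ (u + 2))) :=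
          mul_lt_mul_of_pos_right hkey hfac
      _ = γ * (A0 * Dq / (L : ℝ) ^ (u + 1)) := by
          rw [pow_succ]
          field_simp
      _ = γ * jointP S D f ϵ b L (u + 1) (fun ω M => ω.1 = x ∧ M = m₁ :: tl) := by
          rw [hden]
end

section
/- Let L be a positive integer and define the triangular distribution p on ℤ by p_j = (L − |j|)/L² for |j| ≤ L and p_j = 0 otherwise (so Σ_j p_j = 1). Then for every nonnegative integer s, the total variation distance between p and its shift by s satisfies (1/2)·Σ_{j∈ℤ} |p_j − p_{j−s}| ≤ s/L. (Hence in the smoothed standard protocol, two messages generated from rounded expectations differing by ∂ yield message distributions at total variation distance at most ∂/ϵ, where ∂ is a multiple of the grid spacing 2^{−b} and L·2^{−b} = ϵ.) -/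
open scoped BigOperators

/-- The triangular distribution on `ℤ` with parameter `L`: `p_j = (L - |j|)/L²` for
`|j| ≤ L` and `p_j = 0` otherwise. -/
noncomputable def triZ (L : ℕ) (j : ℤ) : ℝ :=
  if |j| ≤ (L : ℤ) then ((L : ℝ) - |(j : ℝ)|) / (L : ℝ) ^ 2 else 0

lemma triZ_eq (L : ℕ) (j : ℤ) :
    triZ L j = ((max ((L : ℤ) - |j|) 0 : ℤ) : ℝ) / (L : ℝ) ^ 2 := by
  unfold triZ
  split_ifs with h
  · rw [max_eq_left (by omega : (0:ℤ) ≤ (L:ℤ) - |j|)]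
    push_cast
    ring
  · push_neg at h
    rw [max_eq_right (by omega : (L:ℤ) - |j| ≤ 0)]
    simp

lemma triZ_step (L : ℕ) (j : ℤ) :
    |triZ L j - triZ L (j - 1)| ≤ 1 / (L : ℝ) ^ 2 := by
  rw [triZ_eq, triZ_eq, div_sub_div_same, abs_div,
    abs_of_nonneg (by positivity : (0:ℝ) ≤ (L:ℝ) ^ 2)]
  have key : |max ((L:ℤ) - |j|) 0 - max ((L:ℤ) - |j - 1|) 0| ≤ 1 := by
    simp only [Int.abs_eq_natAbs, Int.max_def]
    split <;> split <;> omega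
  rcases Nat.eq_zero_or_pos L with hL | hL
  · subst hL
    simp
  · apply div_le_div_of_nonneg_right ?_ (by positivity)
    calc |(((max ((L:ℤ) - |j|) 0 : ℤ)) : ℝ) - ((max ((L:ℤ) - |j - 1|) 0 : ℤ) : ℝ)|
        = ((|max ((L:ℤ) - |j|) 0 - max ((L:ℤ) - |j - 1|) 0| : ℤ) : ℝ) := by
          push_cast [Int.cast_abs]; ring_nf
      _ ≤ 1 := by exact_mod_cast key

lemma triZ_step_zero (L : ℕ) (j : ℤ) (h : j ≤ -(L:ℤ) ∨ (L:ℤ) < j) :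
    triZ L j - triZ L (j - 1) = 0 := by
  rw [triZ_eq, triZ_eq]
  have h1 : max ((L:ℤ) - |j|) 0 = 0 := by
    simp only [Int.abs_eq_natAbs, Int.max_def]; split <;> omega
  have h2 : max ((L:ℤ) - |j - 1|) 0 = 0 := by
    simp only [Int.abs_eq_natAbs, Int.max_def]; split <;> omega
  rw [h1, h2]
  simp

lemma triZ_zero (L : ℕ) (j : ℤ) (h : (L:ℤ) < |j|) : triZ L j = 0 := by
  unfold triZ
  rw [if_neg (by omega)]

/-- the total variation distance between the triangular distribution on
`{-L,…,L}` and its shift by `s` is at most `s/L`. -/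
theorem stmt_19 (L : ℕ) (hL : 0 < L) (s : ℕ) :
    (1 / 2) * ∑' j : ℤ, |triZ L j - triZ L (j - (s : ℤ))| ≤ (s : ℝ) / L := by
  have hL' : (0:ℝ) < (L:ℝ) := by exact_mod_cast hL
  set S : Finset ℤ := Finset.Icc (-(L:ℤ)) ((L:ℤ) + s) with hS
  have hsupp : ∀ j : ℤ, j ∉ S → |triZ L j - triZ L (j - (s:ℤ))| = 0 := by
    intro j hj
    rw [hS, Finset.mem_Icc] at hj
    push_neg at hj
    have h1 : triZ L j = 0 := by
      apply triZ_zero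
      simp only [Int.abs_eq_natAbs]
      omega
    have h2 : triZ L (j - (s:ℤ)) = 0 := by
      apply triZ_zero
      simp only [Int.abs_eq_natAbs]
      omega
    rw [h1, h2]
    simp
  rw [tsum_eq_sum hsupp]
  -- telescoping
  have tele : ∀ j : ℤ, triZ L j - triZ L (j - (s:ℤ)) =
      ∑ k ∈ Finset.range s, (triZ L (j - k) - triZ L (j - k - 1)) := by
    intro j
    have h := Finset.sum_range_sub' (fun k : ℕ => triZ L (j - k)) s
    calc triZ L j - triZ L (j - (s:ℤ))
        = (fun k : ℕ => triZ L (j - k)) 0 - (fun k : ℕ => triZ L (j - k)) s := by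
          norm_num
      _ = ∑ k ∈ Finset.range s,
            ((fun k : ℕ => triZ L (j - k)) k - (fun k : ℕ => triZ L (j - k)) (k+1)) := h.symm
      _ = ∑ k ∈ Finset.range s, (triZ L (j - k) - triZ L (j - k - 1)) := by
          apply Finset.sum_congr rfl
          intro k _
          simp only
          congr 2
          push_cast
          ring
  have step1 : ∑ j ∈ S, |triZ L j - triZ L (j - (s:ℤ))|
      ≤ ∑ j ∈ S, ∑ k ∈ Finset.range s, |triZ L (j - k) - triZ L (j - k - 1)| := by
    apply Finset.sum_le_sum
    intro j _
    rw [tele j]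
    exact Finset.abs_sum_le_sum_abs _ _
  have inner : ∀ k : ℕ, k ∈ Finset.range s →
      ∑ j ∈ S, |triZ L (j - k) - triZ L (j - k - 1)| ≤ 2 / L := by
    intro k hk
    rw [Finset.mem_range] at hk
    set B : Finset ℤ := Finset.Icc (-(L:ℤ) + 1 + k) ((L:ℤ) + k) with hB
    have hBS : B ⊆ S := by
      intro x hx
      rw [hB, Finset.mem_Icc] at hx
      rw [hS, Finset.mem_Icc]
      omega
    have hzero : ∀ j ∈ S, j ∉ B → |triZ L (j - k) - triZ L (j - k - 1)| = 0 := by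
      intro j _ hj
      rw [hB, Finset.mem_Icc] at hj
      push_neg at hj
      rw [abs_eq_zero]
      apply triZ_step_zero
      omega
    rw [← Finset.sum_subset hBS hzero]
    have hcard : B.card = 2 * L := by
      rw [hB, Int.card_Icc]
      omega
    calc ∑ j ∈ B, |triZ L (j - k) - triZ L (j - k - 1)|
        ≤ B.card • (1 / (L:ℝ) ^ 2) := by
          apply Finset.sum_le_card_nsmul
          intro j _
          exact triZ_step L (j - k)
      _ = (2 * L : ℕ) * (1 / (L:ℝ) ^ 2) := by rw [hcard, nsmul_eq_mul]
      _ = 2 / L := by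
          push_cast
          field_simp
  have step2 : ∑ j ∈ S, ∑ k ∈ Finset.range s, |triZ L (j - k) - triZ L (j - k - 1)|
      ≤ s * (2 / L) := by
    rw [Finset.sum_comm]
    calc ∑ k ∈ Finset.range s, ∑ j ∈ S, |triZ L (j - k) - triZ L (j - k - 1)|
        ≤ ∑ _k ∈ Finset.range s, (2 / (L:ℝ)) := Finset.sum_le_sum inner
      _ = s * (2 / L) := by simp [mul_comm]
  have : ∑ j ∈ S, |triZ L j - triZ L (j - (s:ℤ))| ≤ s * (2 / L) := le_trans step1 step2
  have h2 : (s:ℝ) * (2 / L) = 2 * ((s:ℝ) / L) := by ring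
  linarith
end
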